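/- M(1) = 2, M(2) = 5, and M(2^r) = 7 for every integer r ≥ 2. -/

import Mathlib

/-- A pair of integers `(a, b)` is multiplicatively dependent: `ab ≠ 0` and
there is a nonzero pair of integer exponents `(k₁, k₂)` with `a^k₁ * b^k₂ = 1`
(evaluated in `ℚ`). -/
def MultDepPair (a b : ℤ) : Prop :=
  a * b ≠ 0 ∧ ∃ k : ℤ × ℤ, k ≠ 0 ∧ (a : ℚ) ^ k.1 * (b : ℚ) ^ k.2 = 1

/-- `MSet d` is the set of multiplicatively dependent pairs `(a, b) ∈ ℤ²`
with difference `b - a = d`. -/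
def MSet (d : ℤ) : Set (ℤ × ℤ) :=
  {p | MultDepPair p.1 p.2 ∧ p.2 - p.1 = d}

/-- `M d` is the number of multiplicatively dependent pairs with difference `d`. -/
noncomputable def M (d : ℤ) : ℕ := (MSet d).ncard

/-- `g` is a perfect power: `g = a ^ k` with `a ≥ 2`, `k ≥ 2`. -/
def IsPerfectPow (g : ℕ) : Prop := ∃ a k : ℕ, 2 ≤ a ∧ 2 ≤ k ∧ g = a ^ k

/-- `Nplus d` is the number of primitive solutions `(g, x, y)` of `g^y + g^x = d`
with `g ≥ 2` not a perfect power and `y > x ≥ 1`. -/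
noncomputable def Nplus (d : ℕ) : ℕ :=
  {T : ℕ × ℕ × ℕ | 2 ≤ T.1 ∧ 1 ≤ T.2.1 ∧ T.2.1 < T.2.2 ∧ ¬ IsPerfectPow T.1 ∧
    T.1 ^ T.2.2 + T.1 ^ T.2.1 = d}.ncard

/-- `Nminus d` is the number of primitive solutions `(g, x, y)` of `g^y - g^x = d`
with `g ≥ 2` not a perfect power and `y > x ≥ 1`. -/
noncomputable def Nminus (d : ℕ) : ℕ :=
  {T : ℕ × ℕ × ℕ | 2 ≤ T.1 ∧ 1 ≤ T.2.1 ∧ T.2.1 < T.2.2 ∧ ¬ IsPerfectPow T.1 ∧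
    T.1 ^ T.2.2 = T.1 ^ T.2.1 + d}.ncard

private lemma padicValRat_zpow {p : ℕ} [Fact p.Prime] {q : ℚ} (hq : q ≠ 0) (k : ℤ) :
    padicValRat p (q ^ k) = k * padicValRat p q := by
  cases k with
  | ofNat n => rw [Int.ofNat_eq_coe, zpow_natCast, padicValRat.pow q]
  | negSucc n =>
      rw [zpow_negSucc, padicValRat.inv, padicValRat.pow q, Int.negSucc_eq]
      push_cast; ring

private lemma val_eq {a b : ℤ} (ha : a ≠ 0) (hb : b ≠ 0) {k : ℤ × ℤ}
    (hk : (a : ℚ) ^ k.1 * (b : ℚ) ^ k.2 = 1) (p : ℕ) (hp : p.Prime) :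
    k.1 * (padicValNat p a.natAbs : ℤ) + k.2 * (padicValNat p b.natAbs : ℤ) = 0 := by
  haveI : Fact p.Prime := ⟨hp⟩
  have ha' : (a : ℚ) ≠ 0 := Int.cast_ne_zero.mpr ha
  have hb' : (b : ℚ) ≠ 0 := Int.cast_ne_zero.mpr hb
  have h := congrArg (padicValRat p) hk
  rw [padicValRat.mul (zpow_ne_zero _ ha') (zpow_ne_zero _ hb'),
      padicValRat_zpow ha', padicValRat_zpow hb', padicValRat.one,
      padicValRat.of_int, padicValRat.of_int] at h
  exact_mod_cast h

private lemma mdep_dvd {a b : ℤ} (h : MultDepPair a b) (hb2 : 2 ≤ b.natAbs)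
    {p : ℕ} (hp : p.Prime) (hpa : p ∣ a.natAbs) : p ∣ b.natAbs := by
  obtain ⟨hab, k, hk0, hk⟩ := h
  have ha : a ≠ 0 := left_ne_zero_of_mul hab
  have hb : b ≠ 0 := right_ne_zero_of_mul hab
  by_contra hpb
  haveI : Fact p.Prime := ⟨hp⟩
  have h1 := val_eq ha hb hk p hp
  have hvb : padicValNat p b.natAbs = 0 := padicValNat.eq_zero_of_not_dvd hpb
  have hva : 1 ≤ padicValNat p a.natAbs :=
    one_le_padicValNat_of_dvd (Int.natAbs_ne_zero.mpr ha) hpa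
  have hk1 : k.1 = 0 := by
    rw [hvb] at h1
    simp only [Nat.cast_zero, mul_zero, add_zero, mul_eq_zero] at h1
    rcases h1 with h1 | h1
    · exact h1
    · omega
  obtain ⟨q, hq, hqb⟩ := Nat.exists_prime_and_dvd (show b.natAbs ≠ 1 by omega)
  haveI : Fact q.Prime := ⟨hq⟩
  have h2 := val_eq ha hb hk q hq
  have hvqb : 1 ≤ padicValNat q b.natAbs :=
    one_le_padicValNat_of_dvd (Int.natAbs_ne_zero.mpr hb) hqb
  have hk2 : k.2 = 0 := by
    rw [hk1] at h2
    simp only [zero_mul, zero_add, mul_eq_zero] at h2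
    rcases h2 with h2 | h2
    · exact h2
    · omega
  exact hk0 (Prod.ext hk1 hk2)

private lemma mdep_symm {a b : ℤ} (h : MultDepPair a b) : MultDepPair b a := by
  obtain ⟨hab, k, hk0, hk⟩ := h
  refine ⟨by rwa [mul_comm], ⟨(k.2, k.1), ?_, by rw [mul_comm]; exact hk⟩⟩
  intro hc
  apply hk0
  have h1 : k.2 = 0 := congrArg Prod.fst hc
  have h2 : k.1 = 0 := congrArg Prod.snd hc
  exact Prod.ext h2 h1

private lemma mdep_of {a b : ℤ} (ha : a ≠ 0) (hb : b ≠ 0) (s t : ℕ)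
    (hst : s ≠ 0 ∨ t ≠ 0) (h : a.natAbs ^ s = b.natAbs ^ t) : MultDepPair a b := by
  refine ⟨mul_ne_zero ha hb, ⟨(2 * (s : ℤ), -(2 * (t : ℤ))), ?_, ?_⟩⟩
  · intro hc
    have h1 : 2 * (s : ℤ) = 0 := congrArg Prod.fst hc
    have h2 : -(2 * (t : ℤ)) = 0 := congrArg Prod.snd hc
    rcases hst with hs | ht
    · exact hs (by omega)
    · exact ht (by omega)
  · have ha' : (a : ℚ) ≠ 0 := Int.cast_ne_zero.mpr ha
    have hb' : (b : ℚ) ≠ 0 := Int.cast_ne_zero.mpr hb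
    have key : (a : ℚ) ^ (2 * s) = (b : ℚ) ^ (2 * t) := by
      have hq : ((a.natAbs : ℚ)) ^ s = ((b.natAbs : ℚ)) ^ t := by exact_mod_cast congrArg (fun n : ℕ => (n : ℚ)) h
      have hqa : ((a.natAbs : ℚ)) = |(a : ℚ)| := by
        rw [Nat.cast_natAbs, Int.cast_abs]
      have hqb : ((b.natAbs : ℚ)) = |(b : ℚ)| := by
        rw [Nat.cast_natAbs, Int.cast_abs]
      calc (a : ℚ) ^ (2 * s) = ((a:ℚ) ^ 2) ^ s := by rw [pow_mul]
        _ = (|(a:ℚ)| ^ 2) ^ s := by rw [sq_abs]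
        _ = (|(a:ℚ)| ^ s) ^ 2 := by rw [← pow_mul, mul_comm, pow_mul]
        _ = (|(b:ℚ)| ^ t) ^ 2 := by rw [← hqa, ← hqb, hq]
        _ = (|(b:ℚ)| ^ 2) ^ t := by rw [← pow_mul, mul_comm, pow_mul]
        _ = ((b:ℚ) ^ 2) ^ t := by rw [sq_abs]
        _ = (b : ℚ) ^ (2 * t) := by rw [pow_mul]
    have e1 : (2 * (s : ℤ)) = ((2 * s : ℕ) : ℤ) := by push_cast; ring
    have e2 : (2 * (t : ℤ)) = ((2 * t : ℕ) : ℤ) := by push_cast; ring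
    rw [zpow_neg, e1, e2, zpow_natCast, zpow_natCast, key,
      mul_inv_cancel₀ (pow_ne_zero _ hb')]

private lemma pow2_add {X Y Z : ℕ} (h : 2 ^ X + 2 ^ Y = 2 ^ Z) : X = Y ∧ Z = X + 1 := by
  wlog hXY : X ≤ Y generalizing X Y
  · obtain ⟨h1, h2⟩ := this (X := Y) (Y := X) (by omega) (by omega)
    omega
  obtain ⟨d, rfl⟩ := Nat.exists_eq_add_of_le hXY
  rcases Nat.eq_zero_or_pos d with rfl | hd
  · rw [Nat.add_zero] at h ⊢
    have h' : 2 ^ (X + 1) = 2 ^ Z := by rw [pow_succ]; omega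
    have := Nat.pow_right_injective (le_refl 2) h'
    omega
  · exfalso
    rw [pow_add] at h
    have hfac : 2 ^ X * (1 + 2 ^ d) = 2 ^ Z := by rw [mul_add, mul_one]; exact h
    have hdvd : (1 + 2 ^ d) ∣ 2 ^ Z := Dvd.intro_left _ hfac
    have h2d : 2 ∣ 2 ^ d := dvd_pow_self 2 (by omega)
    have h2d' : 2 ≤ 2 ^ d := Nat.le_of_dvd (Nat.pow_pos (n := d) (by norm_num)) h2d
    obtain ⟨i, hi, hie⟩ := (Nat.dvd_prime_pow Nat.prime_two).mp hdvd
    rcases Nat.eq_zero_or_pos i with rfl | hip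
    · rw [pow_zero] at hie; omega
    · have h2i : 2 ∣ 2 ^ i := dvd_pow_self 2 (by omega)
      omega

private lemma eq_pow2 {n : ℕ} (hn : 2 ≤ n) (h : ∀ p, p.Prime → p ∣ n → p = 2) :
    ∃ X, 1 ≤ X ∧ n = 2 ^ X := by
  have hne : n ≠ 0 := by omega
  have key := Nat.eq_prime_pow_of_unique_prime_dvd hne (fun {d} hd hdn => h d hd hdn)
  refine ⟨n.primeFactorsList.length, ?_, key⟩
  rcases Nat.eq_zero_or_pos n.primeFactorsList.length with h0 | h1
  · rw [h0, pow_zero] at key; omega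
  · exact h1

private lemma pow2_struct {a b : ℤ} {n : ℕ} (h : MultDepPair a b)
    (ha2 : 2 ≤ a.natAbs) (hb2 : 2 ≤ b.natAbs) (hd : (b - a).natAbs = 2 ^ n) :
    ∃ X Y, 1 ≤ X ∧ 1 ≤ Y ∧ a.natAbs = 2 ^ X ∧ b.natAbs = 2 ^ Y := by
  have keyd : ∀ p : ℕ, p.Prime → p ∣ a.natAbs → p ∣ b.natAbs → p = 2 := by
    intro p hp hpa hpb
    have h1 : (p : ℤ) ∣ a := Int.natCast_dvd.mpr hpa
    have h2 : (p : ℤ) ∣ b := Int.natCast_dvd.mpr hpb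
    have h3 : (p : ℤ) ∣ b - a := dvd_sub h2 h1
    have h4 : p ∣ (b - a).natAbs := Int.natCast_dvd.mp h3
    rw [hd] at h4
    exact (Nat.prime_dvd_prime_iff_eq hp Nat.prime_two).mp (hp.dvd_of_dvd_pow h4)
  obtain ⟨X, hX, hAX⟩ := eq_pow2 ha2
    (fun p hp hpa => keyd p hp hpa (mdep_dvd h hb2 hp hpa))
  obtain ⟨Y, hY, hBY⟩ := eq_pow2 hb2
    (fun p hp hpb => keyd p hp (mdep_dvd (mdep_symm h) ha2 hp hpb) hpb)
  exact ⟨X, Y, hX, hY, hAX, hBY⟩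

private lemma pow2_cases {a b : ℤ} {n : ℕ} (h : MultDepPair a b)
    (ha2 : 2 ≤ a.natAbs) (hb2 : 2 ≤ b.natAbs) (hd : b - a = 2 ^ n) :
    (a = 2 ^ n ∧ b = 2 ^ (n + 1)) ∨ (a = -2 ^ (n + 1) ∧ b = -2 ^ n) ∨
    (∃ m, n = m + 1 ∧ 1 ≤ m ∧ a = -2 ^ m ∧ b = 2 ^ m) := by
  have hcast : ∀ m : ℕ, ((2 : ℤ)) ^ m = ((2 ^ m : ℕ) : ℤ) := by intro m; push_cast; ring
  have hdn : (b - a).natAbs = 2 ^ n := by rw [hd, hcast n, Int.natAbs_natCast]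
  obtain ⟨X, Y, hX, hY, hA, hB⟩ := pow2_struct h ha2 hb2 hdn
  rw [hcast n] at hd
  rcases Int.natAbs_eq a with ea | ea <;> rcases Int.natAbs_eq b with eb | eb <;>
    rw [hA] at ea <;> rw [hB] at eb <;> rw [ea, eb] at hd
  · -- a > 0, b > 0
    have hnat : 2 ^ X + 2 ^ n = 2 ^ Y := by omega
    obtain ⟨h1, h2⟩ := pow2_add hnat
    subst h1; subst h2
    exact Or.inl ⟨by rw [ea, hcast], by rw [eb, hcast]⟩
  · -- a > 0, b < 0 : impossible
    exfalso
    have p1 : 1 ≤ 2 ^ X := Nat.one_le_two_pow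
    have p2 : 1 ≤ 2 ^ Y := Nat.one_le_two_pow
    have p3 : 1 ≤ 2 ^ n := Nat.one_le_two_pow
    omega
  · -- a < 0, b > 0
    have hnat : 2 ^ Y + 2 ^ X = 2 ^ n := by omega
    obtain ⟨h1, h2⟩ := pow2_add hnat
    subst h1
    refine Or.inr (Or.inr ⟨Y, h2, hY, ?_, ?_⟩)
    · rw [ea, hcast]
    · rw [eb, hcast]
  · -- a < 0, b < 0
    have hnat : 2 ^ Y + 2 ^ n = 2 ^ X := by omega
    obtain ⟨h1, h2⟩ := pow2_add hnat
    subst h1; subst h2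
    exact Or.inr (Or.inl ⟨by rw [ea, hcast], by rw [eb, hcast]⟩)



private lemma MSet_one : MSet 1 = {((1:ℤ), (2:ℤ)), ((-2:ℤ), (-1:ℤ))} := by
  ext ⟨a, b⟩
  simp only [MSet, Set.mem_setOf_eq, Set.mem_insert_iff, Set.mem_singleton_iff,
    Prod.mk.injEq]
  constructor
  · rintro ⟨hm, hd⟩
    have ha : a ≠ 0 := left_ne_zero_of_mul hm.1
    have hb : b ≠ 0 := right_ne_zero_of_mul hm.1
    by_cases ha1 : a.natAbs = 1
    · rcases Int.natAbs_eq_iff.mp ha1 with rfl | rfl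
      · exact Or.inl ⟨rfl, by omega⟩
      · exact absurd (by omega : b = 0) hb
    by_cases hb1 : b.natAbs = 1
    · rcases Int.natAbs_eq_iff.mp hb1 with rfl | rfl
      · exact absurd (by omega : a = 0) ha
      · exact Or.inr ⟨by omega, rfl⟩
    · exfalso
      have ha2 : 2 ≤ a.natAbs := by have := Int.natAbs_pos.mpr ha; omega
      have hb2 : 2 ≤ b.natAbs := by have := Int.natAbs_pos.mpr hb; omega
      obtain ⟨p, hp, hpa⟩ := Nat.exists_prime_and_dvd ha1
      have hpb := mdep_dvd hm hb2 hp hpa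
      have h3 : (p : ℤ) ∣ b - a :=
        dvd_sub (Int.natCast_dvd.mpr hpb) (Int.natCast_dvd.mpr hpa)
      rw [hd] at h3
      have hp1 : p = 1 := Nat.dvd_one.mp (by simpa using Int.natCast_dvd.mp h3)
      have := hp.two_le
      omega
  · rintro (⟨rfl, rfl⟩ | ⟨rfl, rfl⟩)
    · exact ⟨mdep_of one_ne_zero two_ne_zero 1 0 (Or.inl one_ne_zero) (by decide),
        by norm_num⟩
    · exact ⟨mdep_of (by norm_num) (by norm_num) 0 1 (Or.inr one_ne_zero) (by decide),
        by norm_num⟩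

private lemma MSet_two :
    MSet 2 = {((-1:ℤ), (1:ℤ)), (1, 3), (-3, -1), (2, 4), (-4, -2)} := by
  ext ⟨a, b⟩
  simp only [MSet, Set.mem_setOf_eq, Set.mem_insert_iff, Set.mem_singleton_iff,
    Prod.mk.injEq]
  constructor
  · rintro ⟨hm, hd⟩
    have ha : a ≠ 0 := left_ne_zero_of_mul hm.1
    have hb : b ≠ 0 := right_ne_zero_of_mul hm.1
    by_cases ha1 : a.natAbs = 1
    · rcases Int.natAbs_eq_iff.mp ha1 with rfl | rfl
      · exact Or.inr (Or.inl ⟨rfl, by omega⟩)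
      · exact Or.inl ⟨rfl, by omega⟩
    by_cases hb1 : b.natAbs = 1
    · rcases Int.natAbs_eq_iff.mp hb1 with rfl | rfl
      · exact Or.inl ⟨by omega, rfl⟩
      · exact Or.inr (Or.inr (Or.inl ⟨by omega, rfl⟩))
    · have ha2 : 2 ≤ a.natAbs := by have := Int.natAbs_pos.mpr ha; omega
      have hb2 : 2 ≤ b.natAbs := by have := Int.natAbs_pos.mpr hb; omega
      have hd' : b - a = 2 ^ 1 := by rw [hd]; norm_num
      rcases pow2_cases hm ha2 hb2 hd' with ⟨e1, e2⟩ | ⟨e1, e2⟩ | ⟨m, hm1, hm2, _, _⟩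
      · exact Or.inr (Or.inr (Or.inr (Or.inl ⟨by norm_num at e1 ⊢; exact e1,
          by norm_num at e2 ⊢; exact e2⟩)))
      · exact Or.inr (Or.inr (Or.inr (Or.inr ⟨by norm_num at e1 ⊢; exact e1,
          by norm_num at e2 ⊢; exact e2⟩)))
      · omega
  · rintro (⟨rfl, rfl⟩ | ⟨rfl, rfl⟩ | ⟨rfl, rfl⟩ | ⟨rfl, rfl⟩ | ⟨rfl, rfl⟩)
    · exact ⟨mdep_of (by norm_num) (by norm_num) 1 1 (Or.inl one_ne_zero) (by decide),
        by norm_num⟩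
    · exact ⟨mdep_of (by norm_num) (by norm_num) 1 0 (Or.inl one_ne_zero) (by decide),
        by norm_num⟩
    · exact ⟨mdep_of (by norm_num) (by norm_num) 0 1 (Or.inr one_ne_zero) (by decide),
        by norm_num⟩
    · exact ⟨mdep_of (by norm_num) (by norm_num) 2 1 (Or.inl two_ne_zero) (by decide),
        by norm_num⟩
    · exact ⟨mdep_of (by norm_num) (by norm_num) 1 2 (Or.inl one_ne_zero) (by decide),
        by norm_num⟩

private lemma MSet_pow (s : ℕ) :
    MSet (2 ^ (s + 2)) =
      {((1:ℤ), 1 + 2 ^ (s + 2)), (-1, 2 ^ (s + 2) - 1), (1 - 2 ^ (s + 2), 1),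
        (-2 ^ (s + 2) - 1, -1), (2 ^ (s + 2), 2 ^ (s + 3)),
        (-2 ^ (s + 3), -2 ^ (s + 2)), (-2 ^ (s + 1), 2 ^ (s + 1))} := by
  have h4 : (4 : ℤ) ≤ 2 ^ (s + 2) := by
    calc (4 : ℤ) = 2 ^ 2 := by norm_num
    _ ≤ 2 ^ (s + 2) := pow_le_pow_right₀ (by norm_num) (by omega)
  ext ⟨a, b⟩
  simp only [MSet, Set.mem_setOf_eq, Set.mem_insert_iff, Set.mem_singleton_iff,
    Prod.mk.injEq]
  constructor
  · rintro ⟨hm, hd⟩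
    have ha : a ≠ 0 := left_ne_zero_of_mul hm.1
    have hb : b ≠ 0 := right_ne_zero_of_mul hm.1
    by_cases ha1 : a.natAbs = 1
    · rcases Int.natAbs_eq_iff.mp ha1 with rfl | rfl
      · exact Or.inl ⟨by norm_num, by push_cast at hd ⊢; linarith⟩
      · exact Or.inr (Or.inl ⟨by norm_num, by push_cast at hd ⊢; linarith⟩)
    by_cases hb1 : b.natAbs = 1
    · rcases Int.natAbs_eq_iff.mp hb1 with rfl | rfl
      · exact Or.inr (Or.inr (Or.inl ⟨by push_cast at hd ⊢; linarith, by norm_num⟩))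
      · exact Or.inr (Or.inr (Or.inr (Or.inl
          ⟨by push_cast at hd ⊢; linarith, by norm_num⟩)))
    · have ha2 : 2 ≤ a.natAbs := by have := Int.natAbs_pos.mpr ha; omega
      have hb2 : 2 ≤ b.natAbs := by have := Int.natAbs_pos.mpr hb; omega
      rcases pow2_cases hm ha2 hb2 hd with ⟨e1, e2⟩ | ⟨e1, e2⟩ | ⟨m, hm1, hm2, e1, e2⟩
      · exact Or.inr (Or.inr (Or.inr (Or.inr (Or.inl ⟨e1, e2⟩))))
      · exact Or.inr (Or.inr (Or.inr (Or.inr (Or.inr (Or.inl ⟨e1, e2⟩)))))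
      · have hms : m = s + 1 := by omega
        subst hms
        exact Or.inr (Or.inr (Or.inr (Or.inr (Or.inr (Or.inr ⟨e1, e2⟩)))))
  · have hp1 : (0:ℤ) < 2 ^ (s + 1) := by positivity
    have hp2 : (0:ℤ) < 2 ^ (s + 2) := by positivity
    have hp3 : (0:ℤ) < 2 ^ (s + 3) := by positivity
    have h4 : (4:ℤ) ≤ 2 ^ (s + 2) := by
      calc (4 : ℤ) = 2 ^ 2 := by norm_num
      _ ≤ 2 ^ (s + 2) := pow_le_pow_right₀ (by norm_num) (by omega)
    rintro (⟨rfl, rfl⟩ | ⟨rfl, rfl⟩ | ⟨rfl, rfl⟩ | ⟨rfl, rfl⟩ | ⟨rfl, rfl⟩ |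
      ⟨rfl, rfl⟩ | ⟨rfl, rfl⟩)
    · exact ⟨mdep_of one_ne_zero (ne_of_gt (by linarith)) 1 0
        (Or.inl one_ne_zero) (by simp), by ring⟩
    · exact ⟨mdep_of (by norm_num) (ne_of_gt (by linarith)) 1 0
        (Or.inl one_ne_zero) (by simp), by ring⟩
    · exact ⟨mdep_of (ne_of_lt (by linarith)) one_ne_zero 0 1
        (Or.inr one_ne_zero) (by simp), by ring⟩
    · exact ⟨mdep_of (ne_of_lt (by linarith)) (by norm_num) 0 1
        (Or.inr one_ne_zero) (by simp), by ring⟩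
    · exact ⟨mdep_of (ne_of_gt (by linarith)) (ne_of_gt (by linarith)) (s + 3) (s + 2)
        (Or.inl (by omega))
        (by simp only [Int.natAbs_pow, Int.natAbs_natCast]
            rw [← pow_mul, ← pow_mul, mul_comm]), by ring⟩
    · exact ⟨mdep_of (ne_of_lt (by linarith)) (ne_of_lt (by linarith)) (s + 2) (s + 3)
        (Or.inl (by omega))
        (by simp only [Int.natAbs_neg, Int.natAbs_pow, Int.natAbs_natCast]
            rw [← pow_mul, ← pow_mul, mul_comm]), by ring⟩
    · exact ⟨mdep_of (ne_of_lt (by linarith)) (ne_of_gt (by linarith)) 1 1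
        (Or.inl one_ne_zero)
        (by simp only [Int.natAbs_neg]), by ring⟩

private lemma card7 (T : ℤ) (hT : 2 ≤ T) :
    ({((1:ℤ), 1 + 2 * T), (-1, 2 * T - 1), (1 - 2 * T, 1), (-(2 * T) - 1, -1),
      (2 * T, 4 * T), (-(4 * T), -(2 * T)), (-T, T)} : Set (ℤ × ℤ)).ncard = 7 := by
  rw [Set.ncard_insert_of_notMem (by
        simp only [Set.mem_insert_iff, Set.mem_singleton_iff, Prod.mk.injEq, not_or]
        omega),
      Set.ncard_insert_of_notMem (by
        simp only [Set.mem_insert_iff, Set.mem_singleton_iff, Prod.mk.injEq, not_or]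
        omega),
      Set.ncard_insert_of_notMem (by
        simp only [Set.mem_insert_iff, Set.mem_singleton_iff, Prod.mk.injEq, not_or]
        omega),
      Set.ncard_insert_of_notMem (by
        simp only [Set.mem_insert_iff, Set.mem_singleton_iff, Prod.mk.injEq, not_or]
        omega),
      Set.ncard_insert_of_notMem (by
        simp only [Set.mem_insert_iff, Set.mem_singleton_iff, Prod.mk.injEq, not_or]
        omega),
      Set.ncard_insert_of_notMem (by
        simp only [Set.mem_singleton_iff, Prod.mk.injEq, not_and]
        omega),
      Set.ncard_singleton]

theorem stmt5 : M 1 = 2 ∧ M 2 = 5 ∧ ∀ r : ℕ, 2 ≤ r → M ((2 : ℤ) ^ r) = 7 := by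
  refine ⟨?_, ?_, ?_⟩
  · rw [M, MSet_one]
    exact Set.ncard_pair (by simp)
  · rw [M, MSet_two,
      Set.ncard_insert_of_notMem (by simp), Set.ncard_insert_of_notMem (by simp),
      Set.ncard_insert_of_notMem (by simp), Set.ncard_insert_of_notMem (by simp),
      Set.ncard_singleton]
  · intro r hr
    obtain ⟨s, rfl⟩ : ∃ s, r = s + 2 := ⟨r - 2, by omega⟩
    have h1 : (2:ℤ) ≤ 2 ^ (s + 1) := by
      calc (2:ℤ) = 2 ^ 1 := by norm_num
      _ ≤ 2 ^ (s + 1) := pow_le_pow_right₀ (by norm_num) (by omega)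
    have e2 : (2:ℤ) ^ (s + 2) = 2 * 2 ^ (s + 1) := by ring
    have e3 : (2:ℤ) ^ (s + 3) = 4 * 2 ^ (s + 1) := by ring
    rw [M, MSet_pow, e2, e3]
    exact card7 _ h1
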